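/- With e(y,t) as above, there exists C > 0 such that the time derivative satisfies the pointwise bound |e_t(y,t)| ≤ C t^{-1/2}(e^{-(-y-t)²/(Ct)} + e^{-(-y+t)²/(Ct)}) for all y ∈ ℝ and t > 0; in particular for small t ≤ 1 this requires exploiting cancellation between the two Gaussian terms arising when differentiating in t. -/

import Mathlib

open Real MeasureTheory Set

noncomputable def errfn (z : ℝ) : ℝ :=
  (Real.sqrt Real.pi)⁻¹ * ∫ ξ in Set.Iic z, Real.exp (-ξ ^ 2)

noncomputable def eKer (y t : ℝ) : ℝ :=
  (1 / 2) * (errfn ((-y - t) / Real.sqrt (4 * t)) - errfn ((-y + t) / Real.sqrt (4 * t)))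

lemma gauss_integrable : Integrable (fun ξ : ℝ => Real.exp (-ξ ^ 2)) := by
  have := integrable_exp_neg_mul_sq (b := 1) one_pos
  simpa using this

lemma errfn_hasDerivAt (z : ℝ) :
    HasDerivAt errfn ((Real.sqrt Real.pi)⁻¹ * Real.exp (-z ^ 2)) z := by
  have hint : ∀ w : ℝ, (∫ ξ in Set.Iic w, Real.exp (-ξ ^ 2))
      = (∫ ξ in Set.Iic (0:ℝ), Real.exp (-ξ ^ 2)) + ∫ ξ in (0:ℝ)..w, Real.exp (-ξ ^ 2) := by
    intro w
    rw [← intervalIntegral.integral_Iic_sub_Iic gauss_integrable.integrableOn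
      gauss_integrable.integrableOn]
    ring
  have hD : HasDerivAt (fun w => ∫ ξ in (0:ℝ)..w, Real.exp (-ξ ^ 2)) (Real.exp (-z ^ 2)) z := by
    apply intervalIntegral.integral_hasDerivAt_right
      (gauss_integrable.intervalIntegrable)
      (Continuous.aestronglyMeasurable (by continuity)).stronglyMeasurableAtFilter
      (Continuous.continuousAt (by continuity))
  have : HasDerivAt (fun w => (Real.sqrt Real.pi)⁻¹ *
      ((∫ ξ in Set.Iic (0:ℝ), Real.exp (-ξ ^ 2)) + ∫ ξ in (0:ℝ)..w, Real.exp (-ξ ^ 2)))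
      ((Real.sqrt Real.pi)⁻¹ * Real.exp (-z ^ 2)) z :=
    ((hD.const_add _).const_mul _)
  refine this.congr_of_eventuallyEq ?_
  filter_upwards with w
  rw [errfn, hint w]

lemma sqrt4_hasDerivAt {t : ℝ} (ht : 0 < t) :
    HasDerivAt (fun s : ℝ => Real.sqrt (4 * s)) (2 / Real.sqrt (4 * t)) t := by
  have h4 : HasDerivAt (fun s : ℝ => 4 * s) 4 t := by
    simpa using (hasDerivAt_id t).const_mul (4:ℝ)
  have h := (Real.hasDerivAt_sqrt (by positivity : (4:ℝ) * t ≠ 0)).comp t h4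
  refine h.congr_deriv ?_
  ring

lemma A_hasDerivAt (y : ℝ) {t : ℝ} (ht : 0 < t) :
    HasDerivAt (fun s : ℝ => (-y - s) / Real.sqrt (4 * s))
      ((y - t) / (2 * t * Real.sqrt (4 * t))) t := by
  have hr : (0:ℝ) < Real.sqrt (4 * t) := Real.sqrt_pos.mpr (by positivity)
  have hr2 : Real.sqrt (4 * t) ^ 2 = 4 * t := Real.sq_sqrt (by positivity)
  have hu : HasDerivAt (fun s : ℝ => -y - s) (-1) t := by
    simpa using (hasDerivAt_id t).const_sub (-y)
  have hv : HasDerivAt (fun s : ℝ => (Real.sqrt (4 * s))⁻¹)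
      (-(2 / Real.sqrt (4 * t)) / (Real.sqrt (4 * t)) ^ 2) t :=
    (sqrt4_hasDerivAt ht).inv hr.ne'
  have h := hu.mul hv
  have heq : ∀ s : ℝ, (-y - s) * (Real.sqrt (4 * s))⁻¹ = (-y - s) / Real.sqrt (4 * s) := by
    intro s; rw [div_eq_mul_inv]
  rw [show ((fun s : ℝ => -y - s) * fun s : ℝ => (Real.sqrt (4 * s))⁻¹) = fun s => (-y - s) / Real.sqrt (4 * s) from funext heq] at h
  refine h.congr_deriv ?_
  set r := Real.sqrt (4 * t) with hrdef
  field_simp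
  linear_combination (-t - y) * hr2

lemma B_hasDerivAt (y : ℝ) {t : ℝ} (ht : 0 < t) :
    HasDerivAt (fun s : ℝ => (-y + s) / Real.sqrt (4 * s))
      ((y + t) / (2 * t * Real.sqrt (4 * t))) t := by
  have hr : (0:ℝ) < Real.sqrt (4 * t) := Real.sqrt_pos.mpr (by positivity)
  have hr2 : Real.sqrt (4 * t) ^ 2 = 4 * t := Real.sq_sqrt (by positivity)
  have hu : HasDerivAt (fun s : ℝ => -y + s) 1 t := by
    simpa using (hasDerivAt_id t).const_add (-y)
  have hv : HasDerivAt (fun s : ℝ => (Real.sqrt (4 * s))⁻¹)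
      (-(2 / Real.sqrt (4 * t)) / (Real.sqrt (4 * t)) ^ 2) t :=
    (sqrt4_hasDerivAt ht).inv hr.ne'
  have h := hu.mul hv
  have heq : ∀ s : ℝ, (-y + s) * (Real.sqrt (4 * s))⁻¹ = (-y + s) / Real.sqrt (4 * s) := by
    intro s; rw [div_eq_mul_inv]
  rw [show ((fun s : ℝ => -y + s) * fun s : ℝ => (Real.sqrt (4 * s))⁻¹) = fun s => (-y + s) / Real.sqrt (4 * s) from funext heq] at h
  refine h.congr_deriv ?_
  set r := Real.sqrt (4 * t) with hrdef
  field_simp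
  linear_combination (t - y) * hr2

lemma eKer_hasDerivAt (y : ℝ) {t : ℝ} (ht : 0 < t) :
    HasDerivAt (fun s : ℝ => eKer y s)
      ((1/2) * ((Real.sqrt Real.pi)⁻¹ * Real.exp (-((-y - t)/Real.sqrt (4*t)) ^ 2) *
          ((y - t) / (2 * t * Real.sqrt (4 * t)))
        - (Real.sqrt Real.pi)⁻¹ * Real.exp (-((-y + t)/Real.sqrt (4*t)) ^ 2) *
          ((y + t) / (2 * t * Real.sqrt (4 * t))))) t := by
  have hA := (errfn_hasDerivAt ((-y - t)/Real.sqrt (4*t))).comp t (A_hasDerivAt y ht)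
  have hB := (errfn_hasDerivAt ((-y + t)/Real.sqrt (4*t))).comp t (B_hasDerivAt y ht)
  have h := (hA.sub hB).const_mul (1/2 : ℝ)
  exact h

lemma abs_le_exp_half_sq (z : ℝ) : |z| ≤ Real.exp (z ^ 2 / 2) := by
  have h1 : |z| ≤ Real.exp (|z| - 1) := by
    have := Real.add_one_le_exp (|z| - 1); linarith
  have h2 : Real.exp (|z| - 1) ≤ Real.exp (z ^ 2 / 2) := by
    apply Real.exp_le_exp.mpr
    nlinarith [sq_nonneg (|z| - 1), sq_abs z]
  linarith

lemma abs_g_le (z : ℝ) : |z * Real.exp (-z ^ 2)| ≤ Real.exp (-z ^ 2 / 2) := by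
  rw [abs_mul, abs_of_pos (Real.exp_pos _)]
  calc |z| * Real.exp (-z ^ 2) ≤ Real.exp (z ^ 2 / 2) * Real.exp (-z ^ 2) :=
        mul_le_mul_of_nonneg_right (abs_le_exp_half_sq z) (Real.exp_pos _).le
    _ = Real.exp (-z ^ 2 / 2) := by rw [← Real.exp_add]; ring_nf

lemma poly_le_exp (z : ℝ) : 1 + 2 * z ^ 2 ≤ 3 * Real.exp (z ^ 2 / 2) := by
  have h1 : 1 + z ^ 2 / 4 ≤ Real.exp (z ^ 2 / 4) := by
    have := Real.add_one_le_exp (z ^ 2 / 4); linarith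
  have h2 : Real.exp (z ^ 2 / 2) = Real.exp (z ^ 2 / 4) ^ 2 := by
    rw [← Real.exp_nat_mul]; norm_num; ring_nf
  have h3 : (1 + z ^ 2 / 4) ^ 2 ≤ Real.exp (z ^ 2 / 4) ^ 2 := by
    apply sq_le_sq' <;> nlinarith [sq_nonneg z]
  nlinarith [sq_nonneg (z ^ 2)]

lemma gp_le (z : ℝ) : |(1 - 2 * z ^ 2) * Real.exp (-z ^ 2)| ≤ 3 * Real.exp (-z ^ 2 / 2) := by
  rw [abs_mul, abs_of_pos (Real.exp_pos _)]
  have h1 : |1 - 2 * z ^ 2| ≤ 1 + 2 * z ^ 2 := by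
    rw [abs_le]; constructor <;> nlinarith [sq_nonneg z]
  calc |1 - 2 * z ^ 2| * Real.exp (-z ^ 2) ≤ (3 * Real.exp (z ^ 2 / 2)) * Real.exp (-z ^ 2) := by
        apply mul_le_mul_of_nonneg_right _ (Real.exp_pos _).le
        exact h1.trans (poly_le_exp z)
    _ = 3 * Real.exp (-z ^ 2 / 2) := by rw [mul_assoc, ← Real.exp_add]; ring_nf

lemma g_hasDerivAt (z : ℝ) :
    HasDerivAt (fun w : ℝ => w * Real.exp (-w ^ 2)) ((1 - 2 * z ^ 2) * Real.exp (-z ^ 2)) z := by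
  have h1 : HasDerivAt (fun w : ℝ => -w ^ 2) (-(2 * z)) z := by
    simpa [Pi.neg_def] using ((hasDerivAt_pow 2 z)).neg
  have h2 : HasDerivAt (fun w : ℝ => Real.exp (-w ^ 2)) (Real.exp (-z ^ 2) * (-(2 * z))) z :=
    (Real.hasDerivAt_exp _).comp z h1
  have := (hasDerivAt_id z).mul h2
  refine this.congr_deriv ?_
  simp only [id]
  ring

lemma exp_half_le_two : Real.exp (1/2 : ℝ) ≤ 2 := by
  nlinarith [Real.exp_one_lt_d9, Real.exp_pos (1/2:ℝ),
    (by rw [← Real.exp_add]; norm_num : Real.exp (1/2:ℝ) * Real.exp (1/2:ℝ) = Real.exp 1)]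

set_option maxHeartbeats 1000000 in
/-- Pointwise Gaussian bound on the time derivative:
`|e_t(y,t)| ≤ C t^{-1/2}(e^{-(-y-t)²/(Ct)} + e^{-(-y+t)²/(Ct)})`. -/
theorem eKer_deriv_t_bound :
    ∃ C : ℝ, 0 < C ∧ ∀ (y t : ℝ), 0 < t →
      |deriv (fun s : ℝ => eKer y s) t|
        ≤ C * t ^ (-(1 / 2 : ℝ)) *
            (Real.exp (-(-y - t) ^ 2 / (C * t)) + Real.exp (-(-y + t) ^ 2 / (C * t))) := by
  refine ⟨100, by norm_num, ?_⟩
  intro y t ht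
  have ht' : t ≠ 0 := ht.ne'
  set r := Real.sqrt (4 * t) with hrdef
  have hr : 0 < r := Real.sqrt_pos.mpr (by positivity)
  have hr2 : r ^ 2 = 4 * t := Real.sq_sqrt (by positivity)
  set u := Real.sqrt t with hudef
  have hu : 0 < u := Real.sqrt_pos.mpr ht
  have hu2 : u ^ 2 = t := Real.sq_sqrt ht.le
  have hr4 : r = 2 * u := by
    rw [hrdef, hudef, show (4:ℝ) * t = (2 * Real.sqrt t) ^ 2 by
      nlinarith [Real.sq_sqrt ht.le], Real.sqrt_sq (by positivity)]
  set a := (-y - t) / r with hadef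
  set b := (-y + t) / r with hbdef
  have har : a * r = -y - t := by rw [hadef]; field_simp
  have hbr : b * r = -y + t := by rw [hbdef]; field_simp
  have hpow : t ^ (-(1 / 2 : ℝ)) = u⁻¹ := by
    rw [Real.rpow_neg ht.le, hudef, Real.sqrt_eq_rpow]
  have h0 := (eKer_hasDerivAt y ht).deriv
  rw [← hrdef, ← hadef, ← hbdef] at h0
  clear_value r u a b
  clear hrdef hudef hadef hbdef
  have hba : b - a = u := by
    have h1 : (b - a) * r = u * r := by rw [hr4]; nlinarith [har, hbr, hu2]
    exact mul_right_cancel₀ hr.ne' h1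
  set E := Real.exp (-a ^ 2 / 25) + Real.exp (-b ^ 2 / 25) with hEdef
  have hEpos : 0 < E := by positivity
  clear_value E
  have hnum : Real.exp (-a ^ 2) * (y - t) - Real.exp (-b ^ 2) * (y + t)
      = -(r * (a * Real.exp (-a ^ 2) - b * Real.exp (-b ^ 2)))
        - 2 * t * (Real.exp (-a ^ 2) + Real.exp (-b ^ 2)) := by
    linear_combination Real.exp (-a ^ 2) * har - Real.exp (-b ^ 2) * hbr
  have hD : deriv (fun s : ℝ => eKer y s) t
      = (Real.sqrt Real.pi)⁻¹ / (4 * t * r) *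
        (-(r * (a * Real.exp (-a ^ 2) - b * Real.exp (-b ^ 2)))
          - 2 * t * (Real.exp (-a ^ 2) + Real.exp (-b ^ 2))) := by
    rw [h0, ← hnum]
    field_simp
    ring
  have hS : Real.exp (-a ^ 2) + Real.exp (-b ^ 2) ≤ E := by
    rw [hEdef]
    apply add_le_add <;> (apply Real.exp_le_exp.mpr; nlinarith [sq_nonneg a, sq_nonneg b])
  have hT : |a * Real.exp (-a ^ 2) - b * Real.exp (-b ^ 2)| ≤ 6 * u * E := by
    rcases le_or_gt 1 t with h1 | h1
    · have hu1 : 1 ≤ u := by nlinarith [hu, hu2]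
      have h2 : |a * Real.exp (-a ^ 2) - b * Real.exp (-b ^ 2)|
          ≤ Real.exp (-a ^ 2 / 2) + Real.exp (-b ^ 2 / 2) :=
        (abs_sub _ _).trans (add_le_add (abs_g_le a) (abs_g_le b))
      have h3 : Real.exp (-a ^ 2 / 2) + Real.exp (-b ^ 2 / 2) ≤ E := by
        rw [hEdef]
        apply add_le_add <;> (apply Real.exp_le_exp.mpr; nlinarith [sq_nonneg a, sq_nonneg b])
      have h4 := h2.trans h3
      nlinarith [mul_nonneg (by linarith : (0:ℝ) ≤ 6 * u - 1) hEpos.le]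
    · have hu1 : u ≤ 1 := by nlinarith [hu, hu2]
      have hab : a < b := by linarith [hba, hu]
      obtain ⟨c, hc, hslope⟩ := exists_hasDerivAt_eq_slope
        (fun w : ℝ => w * Real.exp (-w ^ 2)) (fun w : ℝ => (1 - 2 * w ^ 2) * Real.exp (-w ^ 2))
        hab (Continuous.continuousOn (by continuity)) (fun x _ => g_hasDerivAt x)
      have hba' : b - a ≠ 0 := by rw [hba]; exact hu.ne'
      have hgb : b * Real.exp (-b ^ 2) - a * Real.exp (-a ^ 2)
          = (1 - 2 * c ^ 2) * Real.exp (-c ^ 2) * (b - a) := by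
        rw [hslope]; field_simp
      have hc1 : (a - c) ^ 2 ≤ 1 := by
        rcases hc with ⟨hc1, hc2⟩
        nlinarith [hba]
      have hgp : |(1 - 2 * c ^ 2) * Real.exp (-c ^ 2)| ≤ 6 * Real.exp (-a ^ 2 / 25) := by
        refine (gp_le c).trans ?_
        have h4 : Real.exp (-c ^ 2 / 2) ≤ Real.exp (1/2 : ℝ) * Real.exp (-a ^ 2 / 25) := by
          rw [← Real.exp_add]
          apply Real.exp_le_exp.mpr
          nlinarith [sq_nonneg (a - 2 * c)]
        nlinarith [exp_half_le_two, Real.exp_pos (-a ^ 2 / 25), Real.exp_pos (-c ^ 2 / 2)]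
      have h5 : |a * Real.exp (-a ^ 2) - b * Real.exp (-b ^ 2)|
          = |(1 - 2 * c ^ 2) * Real.exp (-c ^ 2)| * u := by
        rw [abs_sub_comm, hgb, hba, abs_mul, abs_of_pos hu]
      rw [h5]
      have h6 : Real.exp (-a ^ 2 / 25) ≤ E := by
        rw [hEdef]; nlinarith [Real.exp_pos (-b ^ 2 / 25)]
      have h7 := mul_le_mul_of_nonneg_right hgp hu.le
      have h8 := mul_le_mul_of_nonneg_right h6 hu.le
      nlinarith [h7, h8]
  have hsp : 0 < Real.sqrt Real.pi := Real.sqrt_pos.mpr Real.pi_pos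
  have hsp1 : (Real.sqrt Real.pi)⁻¹ ≤ 1 := by
    rw [inv_le_one_iff₀]
    right
    nlinarith [Real.sq_sqrt Real.pi_pos.le, Real.pi_gt_three, Real.sqrt_nonneg Real.pi]
  have habs : |deriv (fun s : ℝ => eKer y s) t|
      ≤ (Real.sqrt Real.pi)⁻¹ / (4 * t * r) * (r * (6 * u * E) + 2 * t * E) := by
    rw [hD, abs_mul, abs_of_pos (by positivity : (0:ℝ) < (Real.sqrt Real.pi)⁻¹ / (4 * t * r))]
    apply mul_le_mul_of_nonneg_left _ (by positivity)
    calc |-(r * (a * Real.exp (-a ^ 2) - b * Real.exp (-b ^ 2)))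
          - 2 * t * (Real.exp (-a ^ 2) + Real.exp (-b ^ 2))|
        ≤ |r * (a * Real.exp (-a ^ 2) - b * Real.exp (-b ^ 2))|
          + |2 * t * (Real.exp (-a ^ 2) + Real.exp (-b ^ 2))| :=
          (abs_sub _ _).trans (by rw [abs_neg])
      _ ≤ r * (6 * u * E) + 2 * t * E := by
          apply add_le_add
          · rw [abs_mul, abs_of_pos hr]
            exact mul_le_mul_of_nonneg_left hT hr.le
          · rw [abs_mul, abs_of_pos (by positivity : (0:ℝ) < 2 * t),
              abs_of_pos (by positivity : (0:ℝ) < Real.exp (-a ^ 2) + Real.exp (-b ^ 2))]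
            exact mul_le_mul_of_nonneg_left hS (by positivity)
  have hkey : |deriv (fun s : ℝ => eKer y s) t| ≤ 100 * u⁻¹ * E := by
    refine habs.trans ?_
    have heq : (Real.sqrt Real.pi)⁻¹ / (4 * t * r) * (r * (6 * u * E) + 2 * t * E)
        = (Real.sqrt Real.pi)⁻¹ * (7 / 4) * E * u⁻¹ := by
      rw [hr4, ← hu2]; field_simp; ring
    rw [heq]
    nlinarith [mul_nonneg hEpos.le (inv_pos.mpr hu).le, inv_pos.mpr hu, hEpos]
  have he1 : -(-y - t) ^ 2 / (100 * t) = -a ^ 2 / 25 := by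
    rw [← har, mul_pow, hr2]; field_simp; ring
  have he2 : -(-y + t) ^ 2 / (100 * t) = -b ^ 2 / 25 := by
    rw [← hbr, mul_pow, hr2]; field_simp; ring
  rw [hpow, he1, he2, ← hEdef]
  exact hkey
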